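/- Every finitely generated free group admits a total order invariant under multiplication on both sides (i.e., finitely generated free groups are bi-orderable). -/

import Mathlib

namespace FGBO

variable {k : ℕ}

/-- Noncommutative "power series" over ℤ in `k` variables: functions on words. -/
def A (k : ℕ) : Type := List (Fin k) → ℤ

instance : AddCommGroup (A k) := Pi.addCommGroup

instance : One (A k) := ⟨fun w => if w = [] then 1 else 0⟩

instance : Mul (A k) :=
  ⟨fun f g w => ∑ i ∈ Finset.range (w.length + 1), f (w.take i) * g (w.drop i)⟩

lemma mul_apply (f g : A k) (w : List (Fin k)) :
    (f * g) w = ∑ i ∈ Finset.range (w.length + 1), f (w.take i) * g (w.drop i) := rfl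

lemma one_apply (w : List (Fin k)) : (1 : A k) w = if w = [] then 1 else 0 := rfl

lemma add_apply (f g : A k) (w : List (Fin k)) : (f + g) w = f w + g w := rfl
lemma sub_apply (f g : A k) (w : List (Fin k)) : (f - g) w = f w - g w := rfl
lemma neg_apply (f : A k) (w : List (Fin k)) : (-f) w = -(f w) := rfl
lemma zero_apply (w : List (Fin k)) : (0 : A k) w = 0 := rfl

lemma ext_A {f g : A k} (h : ∀ w, f w = g w) : f = g := funext h

lemma my_one_mul (f : A k) : 1 * f = f := by
  apply ext_A; intro w
  rw [mul_apply]
  rw [Finset.sum_eq_single_of_mem 0 (by simp)]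
  · simp [one_apply]
  · intro b _ hb
    have : w.take b ≠ [] ∨ w = [] := by
      rcases w with _ | ⟨a, t⟩
      · right; rfl
      · left; rcases b with _ | b; · omega
        simp
    rcases this with h | h
    · simp [one_apply, h]
    · subst h; simp at *; omega

lemma my_mul_one (f : A k) : f * 1 = f := by
  apply ext_A; intro w
  rw [mul_apply]
  rw [Finset.sum_eq_single_of_mem w.length (by simp)]
  · simp [one_apply]
  · intro b hb hbne
    have : w.drop b ≠ [] := by
      simp only [Finset.mem_range] at hb
      intro h
      rw [List.drop_eq_nil_iff] at h
      omega
    simp [one_apply, this]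

lemma my_mul_assoc (f g h : A k) : f * g * h = f * (g * h) := by
  apply ext_A; intro w
  set n := w.length with hn
  have key : ∀ j ∈ Finset.range (n+1), (w.take j).length = j := by
    intro j hj; simp only [Finset.mem_range] at hj
    simp [List.length_take]; omega
  calc (f * g * h) w
      = ∑ j ∈ Finset.Ico 0 (n+1), ∑ i ∈ Finset.Ico 0 (j+1),
          f (w.take i) * g ((w.drop i).take (j - i)) * h (w.drop j) := by
        rw [mul_apply]
        rw [Finset.range_eq_Ico]
        apply Finset.sum_congr rfl
        intro j hj
        rw [mul_apply, key j (by rwa [Finset.range_eq_Ico]), Finset.sum_mul,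
          Finset.range_eq_Ico]
        apply Finset.sum_congr rfl
        intro i hi
        simp only [Finset.mem_Ico] at hi hj
        rw [List.take_take, List.drop_take, min_eq_left (by omega)]
    _ = ∑ i ∈ Finset.Ico 0 (n+1), ∑ j ∈ Finset.Ico i (n+1),
          f (w.take i) * g ((w.drop i).take (j - i)) * h (w.drop j) := by
        rw [Finset.sum_Ico_Ico_comm]
    _ = (f * (g * h)) w := by
        rw [mul_apply, Finset.range_eq_Ico]
        apply Finset.sum_congr rfl
        intro i hi
        simp only [Finset.mem_Ico] at hi
        rw [mul_apply, Finset.mul_sum]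
        have hlen : (w.drop i).length = n - i := by simp [hn]
        rw [hlen, Finset.sum_Ico_eq_sum_range, Finset.range_eq_Ico]
        have : n + 1 - i = n - i + 1 := by omega
        rw [this, Finset.range_eq_Ico]
        apply Finset.sum_congr rfl
        intro t ht
        simp only [Finset.mem_Ico] at ht
        rw [List.drop_drop]
        have : i + t - i = t := by omega
        rw [this, mul_assoc]

lemma my_left_distrib (f g h : A k) : f * (g + h) = f * g + f * h := by
  apply ext_A; intro w
  simp only [mul_apply, add_apply, ← Finset.sum_add_distrib]
  apply Finset.sum_congr rfl; intro i _; ring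

lemma my_right_distrib (f g h : A k) : (f + g) * h = f * h + g * h := by
  apply ext_A; intro w
  simp only [mul_apply, add_apply, ← Finset.sum_add_distrib]
  apply Finset.sum_congr rfl; intro i _; ring

instance : Ring (A k) where
  __ := (inferInstance : AddCommGroup (A k))
  mul_assoc := my_mul_assoc
  one_mul := my_one_mul
  mul_one := my_mul_one
  left_distrib := my_left_distrib
  right_distrib := my_right_distrib
  zero_mul f := by apply ext_A; intro w; simp [mul_apply, zero_apply]
  mul_zero f := by apply ext_A; intro w; simp [mul_apply, zero_apply]

/-! ### The units `1 + Xᵢ` -/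

def X (i : Fin k) : A k := fun w => if w = [i] then 1 else 0

def V (i : Fin k) : A k := fun w => if ∀ a ∈ w, a = i then (-1) ^ w.length else 0

lemma X_mul_apply (i : Fin k) (f : A k) :
    ∀ w, (X i * f) w = (match w with | [] => 0 | a :: t => if a = i then f t else 0) := by
  intro w
  rcases w with _ | ⟨a, t⟩
  · simp [mul_apply, X]
  · rw [mul_apply]
    rw [Finset.sum_eq_single_of_mem 1 (by simp)]
    · simp only [List.take_cons, List.take_zero, List.drop_succ_cons, List.drop_zero]
      by_cases h : a = i
      · subst h; simp [X]
      · simp [X, h]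
    · intro b hb hb1
      have : (a :: t).take b ≠ [i] := by
        rcases b with _ | b
        · simp
        · simp only [List.take_succ_cons]
          intro hcon
          have hlen := congrArg List.length hcon
          simp only [Finset.mem_range, List.length_cons] at hb
          rw [List.length_cons, List.length_take, List.length_cons, List.length_nil] at hlen
          omega
      simp [X, this]

/-- reversal anti-automorphism -/
def rev (f : A k) : A k := fun w => f w.reverse

lemma rev_rev (f : A k) : rev (rev f) = f := by
  apply ext_A; intro w; simp [rev]

lemma rev_mul (f g : A k) : rev (f * g) = rev g * rev f := by
  apply ext_A; intro w
  simp only [rev, mul_apply, List.length_reverse]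
  rw [← Finset.sum_range_reflect]
  apply Finset.sum_congr rfl
  intro j hj
  simp only [Finset.mem_range] at hj
  have h1 : (w.reverse.take (w.length + 1 - 1 - j)) = (w.drop j).reverse := by
    rw [List.take_reverse]
    congr 2; omega
  have h2 : (w.reverse.drop (w.length + 1 - 1 - j)) = (w.take j).reverse := by
    rw [List.drop_reverse]
    congr 2; omega
  rw [h1, h2]
  ring
lemma V_nil (i : Fin k) : V i [] = 1 := by simp [V]

lemma V_cons_self (i : Fin k) (t : List (Fin k)) : V i (i :: t) = -(V i t) := by
  by_cases h : ∀ a ∈ t, a = i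
  · simp only [V, List.forall_mem_cons, List.length_cons, eq_self_iff_true, true_and]
    rw [if_pos h, if_pos h, pow_succ]
    ring
  · simp [V, List.forall_mem_cons, h]

lemma V_cons_ne (i a : Fin k) (t : List (Fin k)) (h : a ≠ i) : V i (a :: t) = 0 := by
  simp [V, List.forall_mem_cons, h]

lemma one_add_X_mul_V (i : Fin k) : (1 + X i) * V i = 1 := by
  apply ext_A; intro w
  rw [add_mul, my_one_mul, add_apply, X_mul_apply]
  rcases w with _ | ⟨a, t⟩
  · simp [V_nil, one_apply]
  · by_cases h : a = i
    · subst h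
      simp [V_cons_self, one_apply]
    · simp [V_cons_ne i a t h, h, one_apply]

lemma rev_one : rev (1 : A k) = 1 := by
  apply ext_A; intro w
  simp [rev, one_apply]

lemma rev_add (f g : A k) : rev (f + g) = rev f + rev g := rfl

lemma rev_X (i : Fin k) : rev (X i) = X i := by
  apply ext_A; intro w
  have : w.reverse = [i] ↔ w = [i] := by
    constructor
    · intro h; have := congrArg List.reverse h; simpa using this
    · intro h; subst h; rfl
  simp [rev, X, this]

lemma rev_V (i : Fin k) : rev (V i) = V i := by
  apply ext_A; intro w
  simp [rev, V]

lemma V_mul_one_add_X (i : Fin k) : V i * (1 + X i) = 1 := by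
  have h := congrArg rev (one_add_X_mul_V i)
  rw [rev_mul, rev_V, rev_add, rev_one, rev_X] at h
  exact h

def U (i : Fin k) : (A k)ˣ := ⟨1 + X i, V i, one_add_X_mul_V i, V_mul_one_add_X i⟩

/-- The Magnus homomorphism. -/
def μ (k : ℕ) : FreeGroup (Fin k) →* (A k)ˣ := FreeGroup.lift U

/-- Coefficient series of a group element. -/
def c (g : FreeGroup (Fin k)) : A k := (μ k g : (A k)ˣ).val

lemma c_mul (a b : FreeGroup (Fin k)) : c (a * b) = c a * c b := by
  simp [c, map_mul]

lemma c_one : c (1 : FreeGroup (Fin k)) = 1 := by simp [c]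

lemma c_of (i : Fin k) : c (FreeGroup.of i) = 1 + X i := by
  simp [c, μ, FreeGroup.lift_apply_of, U]

lemma c_of_inv (i : Fin k) : c ((FreeGroup.of i)⁻¹) = V i := by
  simp only [c, μ, map_inv, FreeGroup.lift_apply_of]
  rfl

/-- evaluation at the empty word is a ring hom -/
def ev (k : ℕ) : A k →+* ℤ where
  toFun f := f []
  map_one' := rfl
  map_mul' f g := by simp [mul_apply]
  map_zero' := rfl
  map_add' f g := rfl

lemma c_nil (g : FreeGroup (Fin k)) : c g [] = 1 := by
  have h : (Units.map (ev k).toMonoidHom).comp (μ k) = 1 := by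
    apply FreeGroup.ext_hom
    intro a
    simp only [MonoidHom.comp_apply, MonoidHom.one_apply]
    ext
    show ev k ((μ k (FreeGroup.of a)).val) = 1
    rw [show μ k (FreeGroup.of a) = U a from FreeGroup.lift_apply_of]
    show (1 + X a) [] = 1
    simp [add_apply, one_apply, X]
  have h2 : (Units.map (ev k).toMonoidHom) (μ k g) = 1 := by
    have := congrArg (fun f => f g) (congrArg DFunLike.coe h)
    simpa using this
  have h3 := congrArg Units.val h2
  exact h3
/-! ### Support and single-letter coefficients -/

/-- `f` is supported on words using only the letter `i`. -/
def allP (i : Fin k) (f : A k) : Prop := ∀ w, f w ≠ 0 → ∀ a ∈ w, a = i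

lemma allP_one (i : Fin k) : allP i (1 : A k) := by
  intro w hw a ha
  rw [one_apply] at hw
  rcases w with _ | _
  · simp at ha
  · simp at hw

lemma allP_c_of (i : Fin k) : allP i (c (FreeGroup.of i)) := by
  rw [c_of]
  intro w hw a ha
  rw [add_apply, one_apply] at hw
  rcases w with _ | ⟨b, t⟩
  · simp at ha
  · simp only [X, if_neg (by simp : (b :: t : List (Fin k)) ≠ [])] at hw
    by_cases h : (b :: t : List (Fin k)) = [i]
    · rw [h] at ha; simpa using ha
    · simp [X, h] at hw

lemma allP_c_of_inv (i : Fin k) : allP i (c ((FreeGroup.of i)⁻¹)) := by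
  rw [c_of_inv]
  intro w hw a ha
  by_cases h : ∀ b ∈ w, b = i
  · exact h a ha
  · simp [V, h] at hw

lemma allP_mul (i : Fin k) {f g : A k} (hf : allP i f) (hg : allP i g) :
    allP i (f * g) := by
  intro w hw a ha
  rw [mul_apply] at hw
  obtain ⟨j, -, hj⟩ := Finset.exists_ne_zero_of_sum_ne_zero hw
  rcases mul_ne_zero_iff.mp hj with ⟨h1, h2⟩
  have hw2 : a ∈ w.take j ++ w.drop j := by rw [List.take_append_drop]; exact ha
  rcases List.mem_append.mp hw2 with h | h
  · exact hf _ h1 a h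
  · exact hg _ h2 a h

lemma allP_c_zpow (i : Fin k) (e : ℤ) : allP i (c (FreeGroup.of i ^ e)) := by
  induction e using Int.induction_on with
  | zero => rw [zpow_zero, c_one]; exact allP_one i
  | succ n ih =>
      have : FreeGroup.of i ^ ((n : ℤ) + 1) = FreeGroup.of i ^ (n : ℤ) * FreeGroup.of i := by
        rw [zpow_add_one]
      rw [this, c_mul]
      exact allP_mul i ih (allP_c_of i)
  | pred n ih =>
      have : FreeGroup.of i ^ (-(n : ℤ) - 1) = FreeGroup.of i ^ (-(n : ℤ)) * (FreeGroup.of i)⁻¹ := by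
        rw [zpow_sub_one]
      rw [this, c_mul]
      exact allP_mul i ih (allP_c_of_inv i)

lemma mul_single_letter {f g : A k} (i : Fin k) (hf : f [] = 1) (hg : g [] = 1) :
    (f * g) [i] = f [i] + g [i] := by
  rw [mul_apply]
  simp [Finset.sum_range_succ, hf, hg]
  ring

lemma c_zpow_nil (i : Fin k) (e : ℤ) : c (FreeGroup.of i ^ e) [] = 1 := c_nil _

lemma c_zpow_single (i : Fin k) (e : ℤ) : c (FreeGroup.of i ^ e) [i] = e := by
  induction e using Int.induction_on with
  | zero => rw [zpow_zero, c_one, one_apply]; simp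
  | succ n ih =>
      rw [show FreeGroup.of i ^ ((n : ℤ) + 1) = FreeGroup.of i ^ (n : ℤ) * FreeGroup.of i from by
        rw [zpow_add_one], c_mul, mul_single_letter i (c_nil _) (c_nil _), ih, c_of]
      rw [add_apply, one_apply]
      simp [X]
  | pred n ih =>
      rw [show FreeGroup.of i ^ (-(n : ℤ) - 1) = FreeGroup.of i ^ (-(n : ℤ)) * (FreeGroup.of i)⁻¹ from by
        rw [zpow_sub_one], c_mul, mul_single_letter i (c_nil _) (c_nil _), ih, c_of_inv]
      rw [V_cons_self, V_nil]
      ring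
/-! ### Block words -/

/-- Product of powers of generators determined by a block list. -/
def gp : List (Fin k × ℤ) → FreeGroup (Fin k)
  | [] => 1
  | p :: B => FreeGroup.of p.1 ^ p.2 * gp B

/-- Words that can appear in the support of `c (gp B)`. -/
def SP : List (Fin k × ℤ) → List (Fin k) → Prop
  | [], w => w = []
  | p :: B, w => ∃ t w', w = List.replicate t p.1 ++ w' ∧ SP B w'

lemma supp_gp : ∀ (B : List (Fin k × ℤ)) (w : List (Fin k)), c (gp B) w ≠ 0 → SP B w := by
  intro B
  induction B with
  | nil =>
      intro w hw
      rw [gp, c_one, one_apply] at hw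
      simp only [SP]
      by_contra h
      rw [if_neg h] at hw
      exact hw rfl
  | cons p B ih =>
      intro w hw
      rw [gp, c_mul, mul_apply] at hw
      obtain ⟨j, -, hj⟩ := Finset.exists_ne_zero_of_sum_ne_zero hw
      rcases mul_ne_zero_iff.mp hj with ⟨h1, h2⟩
      have hall := allP_c_zpow p.1 p.2 _ h1
      refine ⟨(w.take j).length, w.drop j, ?_, ih _ h2⟩
      rw [← List.eq_replicate_of_mem hall, List.take_append_drop]

lemma len_le_of_SP : ∀ (B : List (Fin k × ℤ)) (w : List (Fin k)),
    SP B w → w.Chain' (· ≠ ·) → w.length ≤ B.length := by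
  intro B
  induction B with
  | nil => intro w hw _; rw [hw]; simp
  | cons p B ih =>
      rintro w ⟨t, w', rfl, hsp⟩ hch
      match t with
      | 0 => simpa using (ih w' hsp (by simpa using hch)).trans (by simp)
      | 1 =>
          simp only [List.replicate_one, List.cons_append, List.nil_append] at hch ⊢
          have := ih w' hsp (List.IsChain.tail hch)
          simp only [List.length_cons, List.length_cons]
          omega
      | (t + 2) =>
          exfalso
          rw [List.replicate_succ, List.replicate_succ, List.cons_append, List.cons_append] at hch
          exact (List.isChain_cons_cons.mp hch).1 rfl

lemma coeff_gp : ∀ (B : List (Fin k × ℤ)),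
    B.Chain' (fun p q => p.1 ≠ q.1) →
    c (gp B) (B.map Prod.fst) = (B.map Prod.snd).prod := by
  intro B
  induction B with
  | nil => simp [gp, c_one, one_apply]
  | cons p B ih =>
      intro hch
      rw [gp, c_mul, List.map_cons, mul_apply]
      have hne : ((p.1 :: B.map Prod.fst : List (Fin k)).length) = B.length + 1 := by simp
      rw [Finset.sum_eq_single_of_mem 1 (by simp)]
      · have e1 : (p.1 :: B.map Prod.fst).take 1 = [p.1] := rfl
        have e2 : (p.1 :: B.map Prod.fst).drop 1 = B.map Prod.fst := rfl
        rw [e1, e2, c_zpow_single, ih (List.IsChain.tail hch), List.map_cons, List.prod_cons]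
      · intro j hj hj1
        simp only [Finset.mem_range, hne] at hj
        match j with
        | 0 =>
            simp only [List.take_zero, List.drop_zero]
            have hzero : c (gp B) (p.1 :: B.map Prod.fst) = 0 := by
              by_contra h
              have hsp := supp_gp B _ h
              have hchain : (p.1 :: B.map Prod.fst : List (Fin k)).Chain' (· ≠ ·) := by
                simp only [List.Chain', List.isChain_cons]
                constructor
                · intro y hy
                  rcases B with _ | ⟨q, B'⟩
                  · simp at hy
                  · simp only [List.map_cons, List.head?_cons, Option.mem_def] at hy
                    injection hy with hy
                    subst hy
                    exact (List.isChain_cons_cons.mp hch).1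
                · rw [List.isChain_map]
                  exact (List.IsChain.tail hch).imp (fun a b hab => hab)
              have := len_le_of_SP B _ hsp hchain
              simp only [List.length_cons, List.length_map] at this
              omega
            rw [hzero, mul_zero]
        | (j + 1) =>
            have hj2 : 1 ≤ j := by omega
            -- the take contains the head of B.map Prod.fst, which differs from p.1
            rcases B with _ | ⟨q, B'⟩
            · simp at hj; omega
            · have hqp : q.1 ≠ p.1 := fun h => (List.isChain_cons_cons.mp hch).1 h.symm
              have hmem : q.1 ∈ (p.1 :: (q.1 :: B'.map Prod.fst) : List (Fin k)).take (j+1) := by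
                match j, hj2 with
                | (j+1), _ =>
                    simp [List.take_succ_cons]
              have hz : c (FreeGroup.of p.1 ^ p.2)
                  (((p.1 :: (q.1 :: B'.map Prod.fst) : List (Fin k))).take (j+1)) = 0 := by
                by_contra h
                exact hqp (allP_c_zpow p.1 p.2 _ h q.1 (by simpa using hmem))
              simp only [List.map_cons] at *
              rw [hz, zero_mul]
/-! ### From reduced words to blocks -/

def push (i : Fin k) (e : ℤ) : List (Fin k × ℤ) → List (Fin k × ℤ)
  | [] => [(i, e)]
  | q :: B => if q.1 = i then (i, e + q.2) :: B else (i, e) :: q :: B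

def ψ : List (Fin k × Bool) → List (Fin k × ℤ)
  | [] => []
  | p :: L => push p.1 (cond p.2 1 (-1)) (ψ L)

def Red (L : List (Fin k × Bool)) : Prop :=
  List.Chain' (fun p q : Fin k × Bool => p.1 = q.1 → p.2 = q.2) L

lemma push_ne_nil (i : Fin k) (e : ℤ) (B : List (Fin k × ℤ)) : push i e B ≠ [] := by
  cases B with
  | nil => simp [push]
  | cons q B => by_cases hq : q.1 = i <;> simp [push, hq]

lemma mk_single (i : Fin k) (b : Bool) :
    FreeGroup.mk [(i, b)] = FreeGroup.of i ^ (cond b 1 (-1) : ℤ) := by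
  cases b
  · have h : FreeGroup.mk [(i, false)] = (FreeGroup.of i)⁻¹ := by
      rw [show FreeGroup.of i = FreeGroup.mk [(i, true)] from rfl, FreeGroup.inv_mk]
      rfl
    rw [h]
    simp
  · rw [show (cond true 1 (-1) : ℤ) = 1 from rfl, zpow_one]
    rfl

lemma psi_spec : ∀ L : List (Fin k × Bool), Red L →
    (gp (ψ L) = FreeGroup.mk L) ∧
    ((ψ L).Chain' (fun p q => p.1 ≠ q.1)) ∧
    (∀ p ∈ ψ L, p.2 ≠ 0) ∧
    (∀ i (b : Bool) L', L = (i,b) :: L' → ∃ e B, ψ L = (i, e) :: B ∧ (0 < e ↔ b = true)) := by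
  intro L
  induction L with
  | nil =>
      intro _
      refine ⟨by simp [ψ, gp, FreeGroup.one_eq_mk], by simp [ψ, List.Chain'], by simp [ψ], ?_⟩
      intro i b L' h
      exact absurd h (by simp)
  | cons p L ih =>
      intro hred
      obtain ⟨i, b⟩ := p
      have hredL : Red L := List.IsChain.tail hred
      obtain ⟨ih1, ih2, ih3, ih4⟩ := ih hredL
      set ε : ℤ := cond b 1 (-1) with hε
      have hεne : ε ≠ 0 := by cases b <;> simp [hε]
      have hεsgn : 0 < ε ↔ b = true := by cases b <;> simp [hε]
      have hmk : FreeGroup.mk ((i,b) :: L) = FreeGroup.of i ^ ε * FreeGroup.mk L := by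
        rw [← mk_single, FreeGroup.mul_mk]
        rfl
      cases L with
      | nil =>
          have hψ : ψ ((i,b) :: ([] : List (Fin k × Bool))) = [(i, ε)] := by
            simp [ψ, push, hε]
          refine ⟨?_, by rw [hψ]; simp [List.Chain'], ?_, ?_⟩
          · rw [hψ, gp, gp, hmk, ← FreeGroup.one_eq_mk, mul_one]
          · rw [hψ]; intro q hq; simp only [List.mem_singleton] at hq; rw [hq]; exact hεne
          · intro i' b' L'' h
            injection h with h1 h2
            cases h1
            exact ⟨ε, [], hψ, hεsgn⟩
      | cons p₂ L₂ =>
          obtain ⟨i₂, b₂⟩ := p₂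
          obtain ⟨e', B', hψL, hsgn'⟩ := ih4 i₂ b₂ L₂ rfl
          have he'ne : e' ≠ 0 := ih3 (i₂, e') (by rw [hψL]; exact List.mem_cons_self)
          by_cases hii : i₂ = i
          · subst hii
            have hbb : b = b₂ := (List.isChain_cons_cons.mp hred).1 rfl
            subst hbb
            have hψc : ψ ((i₂,b) :: (i₂,b) :: L₂) = (i₂, ε + e') :: B' := by
              show push i₂ ε (ψ ((i₂,b) :: L₂)) = _
              rw [hψL, push, if_pos rfl]
            have hsgn2 : (0 < ε + e' ↔ b = true) ∧ ε + e' ≠ 0 := by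
              cases b with
              | true =>
                  have h1 : 0 < e' := hsgn'.mpr rfl
                  have h2 : ε = 1 := rfl
                  constructor
                  · constructor
                    · intro _; rfl
                    · intro _; omega
                  · omega
              | false =>
                  have h1 : ¬ 0 < e' := by rw [hsgn']; simp
                  have h2 : ε = -1 := rfl
                  constructor
                  · constructor
                    · intro hx; exfalso; omega
                    · intro hx; exact absurd hx (by simp)
                  · omega
            refine ⟨?_, ?_, ?_, ?_⟩
            · rw [hψc, gp, hmk]
              show FreeGroup.of i₂ ^ (ε + e') * gp B' = _
              rw [zpow_add, mul_assoc]
              congr 1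
              rw [← ih1, hψL, gp]
            · rw [hψc]
              rw [hψL] at ih2
              simp only [List.Chain', List.isChain_cons] at ih2 ⊢
              exact ⟨ih2.1, ih2.2⟩
            · rw [hψc]
              intro q hq
              rcases List.mem_cons.mp hq with h | h
              · rw [h]; exact hsgn2.2
              · exact ih3 q (by rw [hψL]; exact List.mem_cons_of_mem _ h)
            · intro i' b' L'' h
              injection h with h1 h2
              cases h1
              exact ⟨ε + e', B', hψc, hsgn2.1⟩
          · have hψc : ψ ((i,b) :: (i₂,b₂) :: L₂) = (i, ε) :: (i₂, e') :: B' := by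
              show push i ε (ψ ((i₂,b₂) :: L₂)) = _
              rw [hψL, push, if_neg hii]
            refine ⟨?_, ?_, ?_, ?_⟩
            · rw [hψc, gp, hmk]
              congr 1
              rw [← ih1, hψL]
            · rw [hψc]; simp only [List.Chain', List.isChain_cons_cons]
              rw [hψL] at ih2
              exact ⟨fun h => hii h.symm, ih2⟩
            · rw [hψc]
              intro q hq
              rcases List.mem_cons.mp hq with h | h
              · rw [h]; exact hεne
              · exact ih3 q (by rw [hψL]; exact h)
            · intro i' b' L'' h
              injection h with h1 h2
              cases h1
              exact ⟨ε, (i₂, e') :: B', hψc, hεsgn⟩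
/-! ### Injectivity of the Magnus map -/

lemma red_of_reduce (L : List (Fin k × Bool)) (h : FreeGroup.reduce L = L) : Red L := by
  induction L with
  | nil => exact List.isChain_nil
  | cons p L ih =>
      rw [FreeGroup.reduce.cons] at h
      cases hr : FreeGroup.reduce L with
      | nil =>
          rw [hr] at h
          simp only at h
          have hL : L = [] := by
            have h2 := congrArg List.length h
            simp only [List.length_cons, List.length_singleton, List.length_nil] at h2
            exact List.eq_nil_of_length_eq_zero (by omega)
          subst hL
          exact List.isChain_singleton p
      | cons hd tl =>
          rw [hr] at h
          change (if p.1 = hd.1 ∧ p.2 = !hd.2 then tl else p :: hd :: tl) = p :: L at h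
          by_cases hc : p.1 = hd.1 ∧ p.2 = !hd.2
          · rw [if_pos hc] at h
            exfalso
            have hle : (FreeGroup.reduce L).length ≤ L.length :=
              FreeGroup.Red.length_le (FreeGroup.reduce.red)
            rw [hr] at hle
            have h2 := congrArg List.length h
            simp only [List.length_cons] at h2 hle
            omega
          · rw [if_neg hc] at h
            injection h with h1 h2
            have hL : FreeGroup.reduce L = L := by rw [hr, h2]
            have hchain := ih hL
            rw [← h2]
            rw [Red]; simp only [List.Chain', List.isChain_cons_cons]
            refine ⟨?_, by rw [h2]; exact hchain⟩
            intro hfst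
            rcases hp2 : p.2 with _ | _ <;> rcases hh2 : hd.2 with _ | _ <;>
              simp_all

lemma c_eq_one_of (g : FreeGroup (Fin k)) (h : μ k g = 1) : g = 1 := by
  by_contra hne
  have hred : Red g.toWord := red_of_reduce _ (FreeGroup.reduce_toWord g)
  obtain ⟨h1, h2, h3, h4⟩ := psi_spec g.toWord hred
  have hLne : g.toWord ≠ [] := fun hh => hne (FreeGroup.toWord_eq_nil_iff.mp hh)
  obtain ⟨p, L', hcons⟩ : ∃ p L', g.toWord = p :: L' := by
    cases hl : g.toWord with
    | nil => exact absurd hl hLne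
    | cons p L' => exact ⟨p, L', rfl⟩
  obtain ⟨e, B, hψ, -⟩ := h4 p.1 p.2 L' (by rw [hcons])
  have hcoeff : c g ((ψ g.toWord).map Prod.fst) = ((ψ g.toWord).map Prod.snd).prod := by
    have hcc := coeff_gp (ψ g.toWord) h2
    rw [h1, FreeGroup.mk_toWord] at hcc
    exact hcc
  have hprodne : ((ψ g.toWord).map Prod.snd).prod ≠ 0 := by
    apply List.prod_ne_zero
    intro hmem
    obtain ⟨q, hq, hq0⟩ := List.mem_map.mp hmem
    exact h3 q hq hq0
  have hcg : c g = 1 := by rw [c, h]; rfl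
  have hword : (ψ g.toWord).map Prod.fst ≠ [] := by rw [hψ]; simp
  rw [hcg, one_apply, if_neg hword] at hcoeff
  exact hprodne hcoeff.symm

lemma c_inj {a b : FreeGroup (Fin k)} (h : c a = c b) : a = b := by
  have hμ : μ k a = μ k b := Units.ext h
  have : μ k (a * b⁻¹) = 1 := by rw [map_mul, map_inv, hμ, mul_inv_cancel]
  have := c_eq_one_of _ this
  exact mul_inv_eq_one.mp this
/-! ### The order -/

def enc : List (Fin k) → ℕ
  | [] => 0
  | a :: w => (a.val + 1) * (k+1) ^ w.length + enc w

lemma enc_lt (w : List (Fin k)) : enc w < (k+1) ^ w.length := by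
  induction w with
  | nil => simp [enc]
  | cons a w ih =>
      have ha : a.val + 1 ≤ k := a.isLt
      have h3 : 0 < (k+1) ^ w.length := pow_pos (by omega) _
      rw [enc, List.length_cons, pow_succ]
      nlinarith

lemma le_enc (w : List (Fin k)) (h : w ≠ []) : (k+1) ^ (w.length - 1) ≤ enc w := by
  cases w with
  | nil => exact absurd rfl h
  | cons a w =>
      rw [enc]
      have h1 : (k+1) ^ w.length ≤ (a.val + 1) * (k+1) ^ w.length :=
        Nat.le_mul_of_pos_left _ (by omega)
      have h2 : (a :: w).length - 1 = w.length := by simp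
      rw [h2]
      omega

lemma enc_lt_of_length_lt {u v : List (Fin k)} (h : u.length < v.length) : enc u < enc v := by
  have hv : v ≠ [] := by intro hnil; rw [hnil] at h; simp at h
  calc enc u < (k+1) ^ u.length := enc_lt u
    _ ≤ (k+1) ^ (v.length - 1) := Nat.pow_le_pow_right (by omega) (by omega)
    _ ≤ enc v := le_enc v hv

lemma enc_injective : Function.Injective (enc (k := k)) := by
  intro u v h
  induction u generalizing v with
  | nil =>
      cases v with
      | nil => rfl
      | cons b v =>
          exfalso
          have := enc_lt_of_length_lt (u := ([] : List (Fin k))) (v := b :: v) (by simp)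
          omega
  | cons a u ih =>
      cases v with
      | nil =>
          exfalso
          have := enc_lt_of_length_lt (u := ([] : List (Fin k))) (v := a :: u) (by simp)
          omega
      | cons b v =>
          have hlen : u.length = v.length := by
            rcases Nat.lt_trichotomy (a :: u).length (b :: v).length with hl | hl | hl
            · exact absurd h (by have := enc_lt_of_length_lt hl; omega)
            · simpa using hl
            · exact absurd h (by have := enc_lt_of_length_lt hl; omega)
          rw [enc, enc, hlen] at h
          have hu := enc_lt u
          have hv := enc_lt v
          rw [hlen] at hu
          have hab : a.val = b.val := by
            rcases Nat.lt_trichotomy a.val b.val with hl | hl | hl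
            · exfalso; nlinarith [pow_pos (show 0 < k + 1 by omega) v.length]
            · exact hl
            · exfalso; nlinarith [pow_pos (show 0 < k + 1 by omega) v.length]
          have : a = b := Fin.ext hab
          subst this
          have h' : enc u = enc v := by omega
          rw [ih h']

lemma exists_min (d : A k) (hd : d ≠ 0) : ∃ w, d w ≠ 0 ∧ ∀ v, d v ≠ 0 → enc w ≤ enc v := by
  classical
  have hne : ∃ n, ∃ w, d w ≠ 0 ∧ enc w = n := by
    obtain ⟨w, hw⟩ : ∃ w, d w ≠ 0 := by
      by_contra hcon
      push_neg at hcon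
      exact hd (ext_A fun w => by rw [hcon w]; rfl)
    exact ⟨enc w, w, hw, rfl⟩
  obtain ⟨w, hw, hwe⟩ := Nat.find_spec hne
  refine ⟨w, hw, ?_⟩
  intro v hv
  rw [hwe]
  exact Nat.find_min' hne ⟨v, hv, rfl⟩

/-- positivity of a series: the minimal coefficient is positive -/
def Pos (d : A k) : Prop := ∃ w, 0 < d w ∧ ∀ v, d v ≠ 0 → enc w ≤ enc v

lemma pos_add {d₁ d₂ : A k} (h1 : Pos d₁) (h2 : Pos d₂) : Pos (d₁ + d₂) := by
  obtain ⟨w1, hw1, hm1⟩ := h1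
  obtain ⟨w2, hw2, hm2⟩ := h2
  have hsupp : ∀ v, (d₁ + d₂) v ≠ 0 → d₁ v ≠ 0 ∨ d₂ v ≠ 0 := by
    intro v hv
    by_contra hc
    push_neg at hc
    rw [add_apply, hc.1, hc.2] at hv
    simp at hv
  rcases Nat.lt_trichotomy (enc w1) (enc w2) with h | h | h
  · refine ⟨w1, ?_, ?_⟩
    · have hz : d₂ w1 = 0 := by
        by_contra hc
        have := hm2 w1 hc
        omega
      rw [add_apply, hz]
      omega
    · intro v hv
      rcases hsupp v hv with h' | h'
      · exact hm1 v h'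
      · have := hm2 v h'; omega
  · have he : w1 = w2 := enc_injective h
    subst he
    refine ⟨w1, by rw [add_apply]; omega, ?_⟩
    intro v hv
    rcases hsupp v hv with h' | h'
    · exact hm1 v h'
    · have := hm2 v h'; omega
  · refine ⟨w2, ?_, ?_⟩
    · have hz : d₁ w2 = 0 := by
        by_contra hc
        have := hm1 w2 hc
        omega
      rw [add_apply, hz]
      omega
    · intro v hv
      rcases hsupp v hv with h' | h'
      · have := hm1 v h'; omega
      · exact hm2 v h'

lemma pos_not_neg {d : A k} (h : Pos d) (h' : Pos (-d)) : False := by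
  obtain ⟨w1, hw1, hm1⟩ := h
  obtain ⟨w2, hw2, hm2⟩ := h'
  rw [neg_apply] at hw2
  have e1 : enc w1 ≤ enc w2 := hm1 w2 (by omega)
  have e2 : enc w2 ≤ enc w1 := hm2 w1 (by rw [neg_apply]; omega)
  have : w1 = w2 := enc_injective (by omega)
  subst this
  omega

lemma pos_total {d : A k} (hd : d ≠ 0) : Pos d ∨ Pos (-d) := by
  obtain ⟨w, hw, hm⟩ := exists_min d hd
  rcases lt_or_gt_of_ne hw with h | h
  · right
    refine ⟨w, by rw [neg_apply]; omega, ?_⟩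
    intro v hv
    rw [neg_apply] at hv
    exact hm v (by omega)
  · exact Or.inl ⟨w, h, hm⟩

lemma pos_conj {x y e : A k} (hx : x [] = 1) (hy : y [] = 1) (he : Pos e) :
    Pos (x * e * y) := by
  obtain ⟨m, hm, hmin⟩ := he
  have hlen : ∀ v, e v ≠ 0 → m.length ≤ v.length := by
    intro v hv
    by_contra hc
    push_neg at hc
    have := enc_lt_of_length_lt hc
    have := hmin v hv
    omega
  have hey : ∀ w : List (Fin k), w.length ≤ m.length → (e * y) w = e w := by
    intro w hw
    rw [mul_apply, Finset.sum_eq_single_of_mem w.length (by simp)]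
    · rw [List.take_length, List.drop_length, hy, mul_one]
    · intro j hj hjne
      simp only [Finset.mem_range] at hj
      have hz : e (w.take j) = 0 := by
        by_contra hc
        have := hlen _ hc
        rw [List.length_take] at this
        omega
      rw [hz, zero_mul]
  have hxey : ∀ w : List (Fin k), w.length ≤ m.length → (x * (e * y)) w = (e * y) w := by
    intro w hw
    rw [mul_apply, Finset.sum_eq_single_of_mem 0 (by simp)]
    · rw [List.take_zero, List.drop_zero, hx, one_mul]
    · intro j hj hjne
      simp only [Finset.mem_range] at hj
      have hlj : (w.drop j).length ≤ m.length := by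
        rw [List.length_drop]; omega
      have hz : (e * y) (w.drop j) = 0 := by
        rw [hey _ hlj]
        by_contra hc
        have := hlen _ hc
        rw [List.length_drop] at this
        omega
      rw [hz, mul_zero]
  have key : ∀ w : List (Fin k), w.length ≤ m.length → (x * e * y) w = e w := by
    intro w hw
    rw [mul_assoc, hxey w hw, hey w hw]
  refine ⟨m, by rw [key m le_rfl]; exact hm, ?_⟩
  intro v hv
  rcases Nat.lt_trichotomy v.length m.length with h | h | h
  · exfalso
    rw [key v h.le] at hv
    have := hlen v hv
    omega
  · exact hmin v (by rwa [key v h.le] at hv)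
  · exact (enc_lt_of_length_lt h).le

end FGBO

theorem mk_linear {α : Type*} {r : α → α → Prop} (hrefl : ∀ a, r a a)
    (htrans : ∀ a b c, r a b → r b c → r a c)
    (hanti : ∀ a b, r a b → r b a → a = b)
    (htot : ∀ a b, r a b ∨ r b a) : IsLinearOrder α r := by
  letI : IsRefl α r := ⟨hrefl⟩
  letI : IsTrans α r := ⟨htrans⟩
  letI : IsAntisymm α r := ⟨hanti⟩
  letI : IsTotal α r := ⟨htot⟩
  letI : IsPreorder α r := ⟨⟩
  letI : IsPartialOrder α r := ⟨⟩
  exact ⟨⟩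

/-- Finitely generated free groups are bi-orderable. -/
theorem free_group_biorderable (k : ℕ) :
    ∃ r : FreeGroup (Fin k) → FreeGroup (Fin k) → Prop,
      IsLinearOrder (FreeGroup (Fin k)) r ∧
      ∀ a b c d : FreeGroup (Fin k), r a b → r (c * a * d) (c * b * d) := by
  classical
  refine ⟨fun a b => a = b ∨ FGBO.Pos (FGBO.c b - FGBO.c a), mk_linear (fun a => Or.inl rfl) ?_ ?_ ?_, ?_⟩
  · rintro a b cc (rfl | hab) h2
    · exact h2
    · rcases h2 with rfl | h2
      · exact Or.inr hab
      · refine Or.inr ?_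
        have habc : FGBO.c cc - FGBO.c a =
            (FGBO.c b - FGBO.c a) + (FGBO.c cc - FGBO.c b) := by abel
        rw [habc]
        exact FGBO.pos_add hab h2
  · rintro a b (rfl | h1) h2
    · rfl
    · rcases h2 with rfl | h2
      · rfl
      · exfalso
        exact FGBO.pos_not_neg h1 (by rwa [neg_sub])
  · intro a b
    by_cases hab : a = b
    · exact Or.inl (Or.inl hab)
    · have hne : FGBO.c b - FGBO.c a ≠ 0 := by
        rw [sub_ne_zero]
        exact fun h => hab (FGBO.c_inj h.symm)
      rcases FGBO.pos_total hne with h | h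
      · exact Or.inl (Or.inr h)
      · exact Or.inr (Or.inr (by rwa [neg_sub] at h))
  · rintro a b cc d (rfl | hab)
    · exact Or.inl rfl
    · refine Or.inr ?_
      have heq : FGBO.c (cc * b * d) - FGBO.c (cc * a * d) =
          FGBO.c cc * (FGBO.c b - FGBO.c a) * FGBO.c d := by
        rw [FGBO.c_mul, FGBO.c_mul, FGBO.c_mul, FGBO.c_mul, mul_sub, sub_mul]
      rw [heq]
      exact FGBO.pos_conj (FGBO.c_nil cc) (FGBO.c_nil d) hab
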